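/- Let C be a satisfiable set of Horn clauses over a finite set X with the complete pebbling marking. Then a variable x ∈ X is forced to false by C (i.e., v(x) = false in every satisfying valuation v) if and only if False is marked '*x'. -/

import Mathlib

structure HornClause (V : Type) where
  prem : Finset V
  concl : Option V

def HornClause.sat {V : Type} (v : V → Bool) (c : HornClause V) : Prop :=
  (∀ x ∈ c.prem, v x = true) → ∃ y, c.concl = some y ∧ v y = true

def SatAll {V : Type} (v : V → Bool) (C : Set (HornClause V)) : Prop :=
  ∀ c ∈ C, c.sat v

/-- `Marked C x` : variable x receives mark '*' via a finite pebbling sequence.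
(Clauses `true ⟹ x` have empty premise set, i.e. premise True.) -/
inductive Marked {V : Type} (C : Set (HornClause V)) : V → Prop
  | step (c : HornClause V) (hc : c ∈ C) (y : V) (hy : c.concl = some y)
      (h : ∀ x ∈ c.prem, Marked C x) : Marked C y

/-- `MarkedRel C z y` : variable y receives the relative mark '*z'. The mark
'*z' starts at z itself and propagates along a clause when all premises are
marked '*' or '*z' (the premises carrying mark '*z' are collected in S). -/
inductive MarkedRel {V : Type} (C : Set (HornClause V)) (z : V) : V → Prop
  | self : MarkedRel C z z
  | step (c : HornClause V) (hc : c ∈ C) (y : V) (hy : c.concl = some y)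
      (S : Finset V) (hS : ∀ x ∈ c.prem, x ∈ S ∨ Marked C x)
      (h : ∀ x ∈ S, MarkedRel C z x) : MarkedRel C z y

/-- False is marked '*' : some clause with conclusion false has all premises marked '*'. -/
def BotMarked {V : Type} (C : Set (HornClause V)) : Prop :=
  ∃ c ∈ C, c.concl = none ∧ ∀ x ∈ c.prem, Marked C x

/-- False is marked '*z' : some clause with conclusion false has all premises
marked '*' or '*z'. -/
def BotMarkedRel {V : Type} (C : Set (HornClause V)) (z : V) : Prop :=
  ∃ c ∈ C, c.concl = none ∧ ∀ x ∈ c.prem, Marked C x ∨ MarkedRel C z x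

lemma marked_true {V : Type} {C : Set (HornClause V)} {v : V → Bool}
    (hv : SatAll v C) {y : V} (h : Marked C y) : v y = true := by
  induction h with
  | step c hc y hy hprem ih =>
    obtain ⟨y', hy', hvy'⟩ := hv c hc ih
    rw [hy] at hy'; cases hy'; exact hvy'

lemma markedRel_true {V : Type} {C : Set (HornClause V)} {v : V → Bool}
    (hv : SatAll v C) {z y : V} (hz : v z = true) (h : MarkedRel C z y) :
    v y = true := by
  induction h with
  | self => exact hz
  | step c hc y hy S hS hmem ih =>
    obtain ⟨y', hy', hvy'⟩ := hv c hc (fun a ha => by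
      rcases hS a ha with h1 | h1
      · exact ih a h1
      · exact marked_true hv h1)
    rw [hy] at hy'; cases hy'; exact hvy'

/-- For a satisfiable Horn set, a variable x is forced to false iff False is
marked '*x' in the complete marking. -/
theorem stmt8 {V : Type} [Fintype V] (C : Set (HornClause V))
    (hsat : ∃ v : V → Bool, SatAll v C) (x : V) :
    (∀ v : V → Bool, SatAll v C → v x = false) ↔ BotMarkedRel C x := by
  classical
  constructor
  · intro hforced
    by_contra hnb
    set v : V → Bool := fun y => decide (Marked C y ∨ MarkedRel C x y) with hvdef
    have hvx : v x = true := by simp [hvdef, MarkedRel.self]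
    have hvsat : SatAll v C := by
      intro c hc hprem
      have hall : ∀ a ∈ c.prem, Marked C a ∨ MarkedRel C x a := by
        intro a ha
        have := hprem a ha
        simpa [hvdef] using this
      cases hco : c.concl with
      | none => exact absurd ⟨c, hc, hco, hall⟩ hnb
      | some y =>
        refine ⟨y, rfl, ?_⟩
        have : MarkedRel C x y := by
          refine MarkedRel.step c hc y hco (c.prem.filter (fun a => MarkedRel C x a)) ?_ ?_
          · intro a ha
            rcases hall a ha with h1 | h1
            · exact Or.inr h1
            · exact Or.inl (by simp [Finset.mem_filter, ha, h1])
          · intro a ha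
            exact (Finset.mem_filter.mp ha).2
        simp [hvdef, this]
    have := hforced v hvsat
    rw [hvx] at this; exact absurd this (by simp)
  · rintro ⟨c, hc, hco, hall⟩ v hv
    by_contra hvx
    have hvx' : v x = true := by
      cases h : v x
      · exact absurd h hvx
      · rfl
    obtain ⟨y, hy, _⟩ := hv c hc (fun a ha => by
      rcases hall a ha with h1 | h1
      · exact marked_true hv h1
      · exact markedRel_true hv hvx' h1)
    rw [hco] at hy; exact nomatch hy
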